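/- arXiv:2307.15921 — 3 statements merged into one kernel-verified Lean document; each statement's English description precedes it below -/
import Mathlib

section
/- For every real number x, the counterclockwise circle integral over the circle of radius 1/2 centered at i in ℂ satisfies (1/(2πi)) ∮_{|z-i|=1/2} z/((1+z²)²(x-z)) dz = -i/(4(x-i)²). (This is the Wodzicki projection π⁺ applied to the symbol ξ/(1+ξ²)², evaluated at ξ = x.) -/
open Complex Metric

lemma aux_hasDerivAt (x : ℝ) {z : ℂ} (h1 : z + I ≠ 0) (h2 : (x : ℂ) - z ≠ 0) :
    HasDerivAt (fun z : ℂ => z / ((z + I)^2 * ((x : ℂ) - z)))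
      ((1 * ((z + I)^2 * ((x : ℂ) - z)) -
        z * (2 * (z + I) ^ 1 * 1 * ((x : ℂ) - z) + (z + I)^2 * (0 - 1))) /
        ((z + I)^2 * ((x : ℂ) - z))^2) z := by
  have hd : HasDerivAt (fun z : ℂ => (z + I)^2 * ((x : ℂ) - z))
      (2 * (z + I) ^ 1 * 1 * ((x : ℂ) - z) + (z + I)^2 * (0 - 1)) z := by
    exact (((hasDerivAt_id z).add_const I).pow 2).mul
      ((hasDerivAt_const z (x : ℂ)).sub (hasDerivAt_id z))
  exact (hasDerivAt_id z).div hd (mul_ne_zero (pow_ne_zero 2 h1) h2)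

/-- Wodzicki projection computation: for real `x`,
`(1/(2πi)) ∮_{|z-i|=1/2} z/((1 + z^2)^2·(x-z)) dz = -I / (4 * ((x : ℂ) - I)^2)`. -/
theorem circle_integral_stmt_6 (x : ℝ) :
    (1 / (2 * (Real.pi : ℂ) * I)) *
      (∮ z in C(I, 1/2), z / ((1 + z^2)^2 * ((x : ℂ) - z))) = -I / (4 * ((x : ℂ) - I)^2) := by
  set f : ℂ → ℂ := fun z => z / ((z + I)^2 * ((x : ℂ) - z)) with hf_def
  set U : Set ℂ := {z : ℂ | z + I ≠ 0 ∧ (x : ℂ) - z ≠ 0} with hU_def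
  have hU : IsOpen U := by
    rw [hU_def, Set.setOf_and]
    exact (isOpen_ne.preimage (by fun_prop : Continuous fun z : ℂ => z + I)).inter
      (isOpen_ne.preimage (by fun_prop : Continuous fun z : ℂ => (x : ℂ) - z))
  have hc : closedBall I (1/2) ⊆ U := by
    intro z hz
    rw [mem_closedBall, Complex.dist_eq] at hz
    have him : |(z - I).im| ≤ 1/2 := (Complex.abs_im_le_norm _).trans hz
    have hzim : (1:ℝ)/2 ≤ z.im := by
      simp only [Complex.sub_im, Complex.I_im] at him
      have := abs_le.1 him
      linarith [this.1]
    constructor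
    · intro h
      have : (z + I).im = 0 := by rw [h]; simp
      simp only [Complex.add_im, Complex.I_im] at this
      linarith
    · intro h
      have : ((x : ℂ) - z).im = 0 := by rw [h]; simp
      simp only [Complex.sub_im, Complex.ofReal_im] at this
      linarith
  have hf : DifferentiableOn ℂ f U := fun z hz =>
    ((aux_hasDerivAt x hz.1 hz.2).differentiableAt).differentiableWithinAt
  have hw : I ∈ ball I (1/2) := mem_ball_self (by norm_num)
  have key := Complex.two_pi_I_inv_smul_circleIntegral_sub_sq_inv_smul_of_differentiable
    hU hc hf hw
  have hI : I + I ≠ 0 := by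
    intro h
    have : (I + I).im = 0 := by rw [h]; simp
    simp at this
  have hxI : (x : ℂ) - I ≠ 0 := by
    intro h
    have : ((x : ℂ) - I).im = 0 := by rw [h]; simp
    simp at this
  have hderiv : deriv f I = -I / (4 * ((x : ℂ) - I)^2) := by
    rw [(aux_hasDerivAt x hI hxI).deriv]
    have h4 : (I + I)^2 = -4 := by
      have : (I + I)^2 = 4 * (I^2) := by ring
      rw [Complex.I_sq] at this; rw [this]; ring
    field_simp
    ring_nf
    linear_combination (8*I) * Complex.I_sq
  have heq : (∮ z in C(I, 1/2), z / ((1 + z^2)^2 * ((x : ℂ) - z)))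
      = ∮ z in C(I, 1/2), ((z - I) ^ 2)⁻¹ • f z := by
    apply circleIntegral.integral_congr (by norm_num)
    intro z hz
    simp only [hf_def, smul_eq_mul]
    have h1 : (1 + z^2)^2 = (z - I)^2 * (z + I)^2 := by
      have : (z - I) * (z + I) = z^2 - I^2 := by ring
      rw [Complex.I_sq] at this
      calc (1 + z^2)^2 = ((z - I) * (z + I))^2 := by rw [this]; ring
        _ = (z - I)^2 * (z + I)^2 := by ring
    rw [h1]
    simp only [div_eq_mul_inv, mul_inv]
    ring
  rw [heq, ← hderiv, ← key]
  simp [smul_eq_mul, div_eq_mul_inv]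
end

section
/- For every real number x, the counterclockwise circle integral over the circle of radius 1/2 centered at i in ℂ satisfies (1/(2πi)) ∮_{|z-i|=1/2} z²/((1+z²)²(x-z)) dz = -ix/(4(x-i)²). (This is the Wodzicki projection π⁺ applied to the symbol ξ²/(1+ξ²)², evaluated at ξ = x.) -/
open Complex Metric

private lemma circleIntegral_add' {f g : ℂ → ℂ} {c : ℂ} {R : ℝ}
    (hf : CircleIntegrable f c R) (hg : CircleIntegrable g c R) :
    (∮ z in C(c, R), (f z + g z)) = (∮ z in C(c, R), f z) + ∮ z in C(c, R), g z := by
  simp only [circleIntegral, smul_add]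
  exact intervalIntegral.integral_add hf.out hg.out

set_option maxHeartbeats 2000000 in
lemma pf_decomp (t u z : ℂ) (h1 : z - t ≠ 0) (h2 : z + t ≠ 0) (h3 : u - z ≠ 0)
    (h4 : u - t ≠ 0) (h5 : u + t ≠ 0) (ht : t ≠ 0) :
    z^2 / (((z-t)*(z+t))^2 * (u-z)) =
      (1/(4*(u-t))) * ((z-t)^2)⁻¹ + ((u/(4*t*(u-t)^2)) * (z-t)⁻¹ +
        ((1/(4*(u+t))) / (z+t)^2 + (-u/(4*t*(u+t)^2)) / (z+t) +
          (u^2/((u-t)^2*(u+t)^2)) / (u-z))) := by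
  have e1 : (1/(4*(u-t))) * ((z-t)^2)⁻¹ = 1 / (4*(u-t)*(z-t)^2) := by
    rw [one_div, one_div, ← mul_inv]
  have e2 : (u/(4*t*(u-t)^2)) * (z-t)⁻¹ = u / (4*t*(u-t)^2*(z-t)) := by
    rw [division_def, mul_assoc, ← mul_inv, ← division_def]
  have e3 : (1/(4*(u+t))) / (z+t)^2 = 1 / (4*(u+t)*(z+t)^2) := by
    rw [div_div]
  have e4 : (-u/(4*t*(u+t)^2)) / (z+t) = -u / (4*t*(u+t)^2*(z+t)) := by
    rw [div_div]
  have e5 : (u^2/((u-t)^2*(u+t)^2)) / (u-z) = u^2 / ((u-t)^2*(u+t)^2*(u-z)) := by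
    rw [div_div]
  rw [e1, e2, e3, e4, e5]
  have n1 : 4*(u-t)*(z-t)^2 ≠ 0 := by
    apply mul_ne_zero (mul_ne_zero (by norm_num) h4) (pow_ne_zero _ h1)
  have n2 : 4*t*(u-t)^2*(z-t) ≠ 0 :=
    mul_ne_zero (mul_ne_zero (mul_ne_zero (by norm_num) ht) (pow_ne_zero _ h4)) h1
  have n3 : 4*(u+t)*(z+t)^2 ≠ 0 :=
    mul_ne_zero (mul_ne_zero (by norm_num) h5) (pow_ne_zero _ h2)
  have n4 : 4*t*(u+t)^2*(z+t) ≠ 0 :=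
    mul_ne_zero (mul_ne_zero (mul_ne_zero (by norm_num) ht) (pow_ne_zero _ h5)) h2
  have n5 : (u-t)^2*(u+t)^2*(u-z) ≠ 0 :=
    mul_ne_zero (mul_ne_zero (pow_ne_zero _ h4) (pow_ne_zero _ h5)) h3
  rw [div_add_div _ _ n3 n4, div_add_div _ _ (mul_ne_zero n3 n4) n5,
    div_add_div _ _ n2 (mul_ne_zero (mul_ne_zero n3 n4) n5),
    div_add_div _ _ n1 (mul_ne_zero n2 (mul_ne_zero (mul_ne_zero n3 n4) n5)),
    div_eq_div_iff (mul_ne_zero (pow_ne_zero _ (mul_ne_zero h1 h2)) h3)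
      (mul_ne_zero n1 (mul_ne_zero n2 (mul_ne_zero (mul_ne_zero n3 n4) n5)))]
  ring


/-- Wodzicki projection computation: for real `x`,
`(1/(2πi)) ∮_{|z-i|=1/2} z^2/((1 + z^2)^2·(x-z)) dz = -I * (x : ℂ) / (4 * ((x : ℂ) - I)^2)`. -/
theorem circle_integral_stmt_7 (x : ℝ) :
    (1 / (2 * (Real.pi : ℂ) * I)) *
      (∮ z in C(I, 1/2), z^2 / ((1 + z^2)^2 * ((x : ℂ) - z))) = -I * (x : ℂ) / (4 * ((x : ℂ) - I)^2) := by
  set u : ℂ := (x : ℂ) with hu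
  have huI : u - I ≠ 0 := by
    intro h
    have := congrArg Complex.im h
    simp [hu] at this
  have huI' : u + I ≠ 0 := by
    intro h
    have := congrArg Complex.im h
    simp [hu] at this
  set A : ℂ := 1 / (4 * (u - I)) with hA
  set B : ℂ := u / (4 * I * (u - I) ^ 2) with hB
  set CC : ℂ := 1 / (4 * (u + I)) with hC
  set D : ℂ := -u / (4 * I * (u + I) ^ 2) with hD
  set E : ℂ := u ^ 2 / ((u - I) ^ 2 * (u + I) ^ 2) with hE
  -- basic facts about points in the closed ball
  have hball : ∀ z : ℂ, dist z I ≤ 1/2 → z + I ≠ 0 ∧ u - z ≠ 0 := by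
    intro z hz
    constructor
    · intro h
      have hz' : z = -I := by linear_combination h
      rw [hz', Complex.dist_eq] at hz
      have h2 : ‖(-I - I)‖ ^ 2 = 4 := by
        rw [Complex.sq_norm]
        simp [Complex.normSq_apply]
        norm_num
      nlinarith [norm_nonneg (-I - I)]
    · intro h
      have hz' : z = u := by linear_combination -h
      rw [hz', Complex.dist_eq] at hz
      have h2 : ‖(u - I)‖ ^ 2 = x ^ 2 + 1 := by
        rw [Complex.sq_norm]
        simp [Complex.normSq_apply, hu]
        ring
      nlinarith [norm_nonneg (u - I), sq_nonneg x]
  have hsphere : ∀ z ∈ sphere I (1/2 : ℝ), z - I ≠ 0 ∧ z + I ≠ 0 ∧ u - z ≠ 0 := by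
    intro z hz
    have hd : dist z I = 1/2 := mem_sphere.mp hz
    have hle : dist z I ≤ 1/2 := le_of_eq hd
    refine ⟨?_, (hball z hle).1, (hball z hle).2⟩
    intro h
    rw [Complex.dist_eq, h] at hd
    simp at hd
  -- the partial fraction decomposition on the sphere
  have hEq : Set.EqOn (fun z : ℂ => z^2 / ((1 + z^2)^2 * (u - z)))
      (fun z : ℂ => A * (z - I) ^ (-2 : ℤ) + (B * (z - I)⁻¹ + (CC / (z + I)^2 + D / (z + I) + E / (u - z))))
      (sphere I (1/2 : ℝ)) := by
    intro z hz
    obtain ⟨h1, h2, h3⟩ := hsphere z hz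
    simp only
    rw [show (1 : ℂ) + z ^ 2 = (z - I) * (z + I) by linear_combination Complex.I_sq]
    simp only [hA, hB, hC, hD, hE]
    rw [show ((-2 : ℤ) = -(2 : ℕ)) by norm_num, zpow_neg, zpow_natCast]
    exact pf_decomp I u z h1 h2 h3 huI huI' Complex.I_ne_zero
  -- integrability of the three pieces
  have hR : (0 : ℝ) ≤ 1/2 := by norm_num
  have hi1 : CircleIntegrable (fun z : ℂ => A * (z - I) ^ (-2 : ℤ)) I (1/2) := by
    apply ContinuousOn.circleIntegrable hR
    apply ContinuousOn.mul continuousOn_const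
    apply ContinuousOn.zpow₀ (by fun_prop)
    intro z hz
    exact Or.inl (hsphere z hz).1
  have hi2 : CircleIntegrable (fun z : ℂ => B * (z - I)⁻¹) I (1/2) := by
    apply ContinuousOn.circleIntegrable hR
    apply ContinuousOn.mul continuousOn_const
    exact ContinuousOn.inv₀ (by fun_prop) (fun z hz => (hsphere z hz).1)
  have hi3 : CircleIntegrable (fun z : ℂ => CC / (z + I)^2 + D / (z + I) + E / (u - z)) I (1/2) := by
    apply ContinuousOn.circleIntegrable hR
    apply ContinuousOn.add
    apply ContinuousOn.add
    · exact ContinuousOn.div continuousOn_const (by fun_prop)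
        (fun z hz => pow_ne_zero 2 (hsphere z hz).2.1)
    · exact ContinuousOn.div continuousOn_const (by fun_prop)
        (fun z hz => (hsphere z hz).2.1)
    · exact ContinuousOn.div continuousOn_const (by fun_prop)
        (fun z hz => (hsphere z hz).2.2)
  -- compute the three integrals
  have hv1 : (∮ z in C(I, 1/2), A * (z - I) ^ (-2 : ℤ)) = 0 := by
    rw [circleIntegral.integral_const_mul,
      circleIntegral.integral_sub_zpow_of_ne (by norm_num : (-2 : ℤ) ≠ -1), mul_zero]
  have hv2 : (∮ z in C(I, 1/2), B * (z - I)⁻¹) = B * (2 * Real.pi * I) := by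
    rw [circleIntegral.integral_const_mul,
      circleIntegral.integral_sub_inv_of_mem_ball (mem_ball_self (by norm_num))]
  have hv3 : (∮ z in C(I, 1/2), (CC / (z + I)^2 + D / (z + I) + E / (u - z))) = 0 := by
    apply circleIntegral_eq_zero_of_differentiable_on_off_countable hR Set.countable_empty
    · apply ContinuousOn.add
      apply ContinuousOn.add
      · exact ContinuousOn.div continuousOn_const (by fun_prop)
          (fun z hz => pow_ne_zero 2 (hball z (mem_closedBall.mp hz)).1)
      · exact ContinuousOn.div continuousOn_const (by fun_prop)
          (fun z hz => (hball z (mem_closedBall.mp hz)).1)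
      · exact ContinuousOn.div continuousOn_const (by fun_prop)
          (fun z hz => (hball z (mem_closedBall.mp hz)).2)
    · intro z hz
      have hzc : dist z I ≤ 1/2 := le_of_lt (mem_ball.mp hz.1)
      obtain ⟨h2, h3⟩ := hball z hzc
      have d1 : DifferentiableAt ℂ (fun w : ℂ => (w + I) ^ 2) z := by fun_prop
      have d2 : DifferentiableAt ℂ (fun w : ℂ => w + I) z := by fun_prop
      have d3 : DifferentiableAt ℂ (fun w : ℂ => u - w) z := by fun_prop
      exact (((differentiableAt_const CC).div d1 (pow_ne_zero 2 h2)).add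
        ((differentiableAt_const D).div d2 h2)).add
        ((differentiableAt_const E).div d3 h3)
  -- put everything together
  have hi23 : CircleIntegrable (fun z : ℂ => B * (z - I)⁻¹ +
      (CC / (z + I)^2 + D / (z + I) + E / (u - z))) I (1/2) := hi2.add hi3
  rw [circleIntegral.integral_congr (by norm_num) hEq,
    circleIntegral_add' hi1 hi23, circleIntegral_add' hi2 hi3,
    hv1, hv2, hv3, zero_add, add_zero]
  have hπ : (Real.pi : ℂ) ≠ 0 := Complex.ofReal_ne_zero.mpr Real.pi_ne_zero
  have hI : (I : ℂ) ≠ 0 := Complex.I_ne_zero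
  have hBval : B = -I * u / (4 * (u - I) ^ 2) := by
    rw [hB, div_eq_div_iff (mul_ne_zero (mul_ne_zero (by norm_num) hI) (pow_ne_zero _ huI))
      (mul_ne_zero (by norm_num) (pow_ne_zero _ huI))]
    linear_combination (4 * u * (u - I) ^ 2) * Complex.I_sq
  have key : (1 / (2 * (Real.pi : ℂ) * I)) * (B * (2 * Real.pi * I)) = B := by
    field_simp
  rw [key, hBval]
end

section
/- The improper integral over the real line of the complex-valued function ξ ↦ (2-6ξ²)/((ξ-i)⁴(ξ+i)³) satisfies ∫_{-∞}^{∞} (2-6ξ²)/((ξ-i)⁴(ξ+i)³) dξ = iπ/4. -/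
open Complex MeasureTheory Filter

noncomputable def Phi14 : ℂ → ℂ := fun z =>
  -(I/3) / (z - I)^3 + (I/4) / (z + I) - (1/4) / (z + I)^2

lemma sub_I_ne14 (ξ : ℝ) : (ξ:ℂ) - I ≠ 0 := by
  intro h
  have := congrArg Complex.im h
  simp at this

lemma add_I_ne14 (ξ : ℝ) : (ξ:ℂ) + I ≠ 0 := by
  intro h
  have := congrArg Complex.im h
  simp at this

lemma one_add_sq_ne14 (ξ : ℝ) : (1:ℂ) + (ξ:ℂ)^2 ≠ 0 := by
  have h : (1:ℂ) + (ξ:ℂ)^2 = ((ξ:ℂ) - I) * ((ξ:ℂ) + I) := by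
    have hI : I^2 = -1 := I_sq
    linear_combination hI
  rw [h]
  exact mul_ne_zero (sub_I_ne14 ξ) (add_I_ne14 ξ)

lemma key14 (ξ : ℝ) :
    (2 - 6*(ξ:ℂ)^2) / (((ξ:ℂ) - I)^4 * ((ξ:ℂ) + I)^3) =
      I/((ξ:ℂ)-I)^4 - I/(4*((ξ:ℂ)+I)^2) + 1/(2*((ξ:ℂ)+I)^3) + I/(4*(1 + (ξ:ℂ)^2)) := by
  have h1 := sub_I_ne14 ξ
  have h2 := add_I_ne14 ξ
  have h3 := one_add_sq_ne14 ξ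
  have hB : ((ξ:ℂ) - I) ^ 4 * (4 * ((ξ:ℂ) + I) ^ 2) * (2 * ((ξ:ℂ) + I) ^ 3) ≠ 0 := by
    apply mul_ne_zero (mul_ne_zero (pow_ne_zero _ h1) (mul_ne_zero (by norm_num) (pow_ne_zero _ h2)))
    exact mul_ne_zero (by norm_num) (pow_ne_zero _ h2)
  field_simp
  ring_nf
  have i3 : I^3 = -I := by linear_combination I * I_sq
  have i5 : I^5 = I := by linear_combination I * I_pow_four
  have i6 : I^6 = -1 := by linear_combination I^2 * I_pow_four + I_sq
  have i7 : I^7 = -I := by linear_combination I^3 * I_pow_four + I * I_sq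
  have i8 : I^8 = 1 := by linear_combination (I^4 + 1) * I_pow_four
  simp only [i3, i5, i6, i7, i8, I_sq, I_pow_four]
  ring_nf

set_option maxHeartbeats 1000000 in
lemma hasDeriv14 (ξ : ℝ) : HasDerivAt (fun y : ℝ => Phi14 y + (I/4) * (Real.arctan y : ℂ))
    ((2 - 6*(ξ:ℂ)^2) / (((ξ:ℂ) - I)^4 * ((ξ:ℂ) + I)^3)) ξ := by
  have h1 : HasDerivAt (fun z : ℂ => (z - I)^3) (3*((ξ:ℂ)-I)^2) (ξ:ℂ) := by
    simpa using ((hasDerivAt_id (ξ:ℂ)).sub_const I).fun_pow 3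
  have h2 : HasDerivAt (fun z : ℂ => z + I) 1 (ξ:ℂ) := (hasDerivAt_id _).add_const I
  have h3 : HasDerivAt (fun z : ℂ => (z + I)^2) (2*((ξ:ℂ)+I)) (ξ:ℂ) := by
    simpa using ((hasDerivAt_id (ξ:ℂ)).add_const I).fun_pow 2
  have hPhi : HasDerivAt Phi14
      (-(I/3) * (-(3*((ξ:ℂ)-I)^2) / (((ξ:ℂ)-I)^3)^2)
        + (I/4) * (-1 / (((ξ:ℂ)+I))^2)
        - (1/4) * (-(2*((ξ:ℂ)+I)) / (((ξ:ℂ)+I)^2)^2)) (ξ:ℂ) := by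
    have t1 := (h1.inv (pow_ne_zero 3 (sub_I_ne14 ξ))).const_mul (-(I/3))
    have t2 := (h2.inv (add_I_ne14 ξ)).const_mul (I/4)
    have t3 := (h3.inv (pow_ne_zero 2 (add_I_ne14 ξ))).const_mul (1/4:ℂ)
    have h := (t1.add t2).sub t3
    exact h.congr_of_eventuallyEq (Filter.Eventually.of_forall fun z => by
      simp [Phi14, div_eq_mul_inv])
  have hR := hPhi.comp_ofReal
  have hatan : HasDerivAt (fun y : ℝ => (I/4) * (Real.arctan y : ℂ))
      ((I/4) * ((1 / (1 + (ξ:ℝ)^2) : ℝ) : ℂ)) ξ :=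
    ((Real.hasDerivAt_arctan ξ).ofReal_comp).const_mul (I/4)
  have h := hR.add hatan
  refine h.congr_deriv ?_
  rw [key14 ξ]
  push_cast
  have eA : -(I/3) * (-(3*((ξ:ℂ)-I)^2) / (((ξ:ℂ)-I)^3)^2) = I/((ξ:ℂ)-I)^4 := by
    have e1 := sub_I_ne14 ξ
    field_simp
  have eC : (1/4:ℂ) * (-(2*((ξ:ℂ)+I)) / (((ξ:ℂ)+I)^2)^2) = -(1/(2*((ξ:ℂ)+I)^3)) := by
    have e2 := add_I_ne14 ξ
    field_simp
    ring
  have eB : I/4 * (-1/(((ξ:ℂ)+I))^2) = -(I/(4*((ξ:ℂ)+I)^2)) := by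
    have e2 := add_I_ne14 ξ
    field_simp
  have eD : I/4 * (1/(1+(ξ:ℂ)^2)) = I/(4*(1+(ξ:ℂ)^2)) := by
    have e3 := one_add_sq_ne14 ξ
    field_simp
  rw [eA, eB, eC, eD]
  ring

lemma integrable14 : Integrable (fun ξ : ℝ =>
    (2 - 6*(ξ:ℂ)^2) / (((ξ:ℂ) - I)^4 * ((ξ:ℂ) + I)^3)) := by
  apply Integrable.mono' ((integrable_inv_one_add_sq).const_mul 6)
  · apply Continuous.aestronglyMeasurable
    apply Continuous.div
    · fun_prop
    · fun_prop
    · intro x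
      exact mul_ne_zero (pow_ne_zero _ (sub_I_ne14 x)) (pow_ne_zero _ (add_I_ne14 x))
  · filter_upwards with ξ
    have hpos : (0:ℝ) < 1 + ξ^2 := by positivity
    have n1 : ‖(ξ:ℂ) - I‖^2 = 1 + ξ^2 := by
      rw [Complex.sq_norm, Complex.normSq_apply]
      simp
      ring
    have n2 : ‖(ξ:ℂ) + I‖^2 = 1 + ξ^2 := by
      rw [Complex.sq_norm, Complex.normSq_apply]
      simp
      ring
    have hb1 : 1 ≤ ‖(ξ:ℂ) + I‖ := by nlinarith [norm_nonneg ((ξ:ℂ) + I), sq_nonneg ξ]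
    have hnum : ‖(2:ℂ) - 6*(ξ:ℂ)^2‖ ≤ 6*(1+ξ^2) := by
      have hc : (2:ℂ) - 6*(ξ:ℂ)^2 = ((2 - 6*ξ^2 : ℝ) : ℂ) := by push_cast; ring
      rw [hc, Complex.norm_real, Real.norm_eq_abs]
      rcases abs_cases (2 - 6*ξ^2) with ⟨h,_⟩|⟨h,_⟩ <;> rw [h] <;> nlinarith [sq_nonneg ξ]
    have ha : ‖(ξ:ℂ) - I‖^4 = (1+ξ^2)^2 := by
      rw [show (4:ℕ) = 2*2 from rfl, pow_mul, n1]
    have hb : (1+ξ^2) ≤ ‖(ξ:ℂ) + I‖^3 := by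
      calc (1+ξ^2) = ‖(ξ:ℂ) + I‖^2 * 1 := by rw [n2, mul_one]
        _ ≤ ‖(ξ:ℂ) + I‖^2 * ‖(ξ:ℂ) + I‖ := by
            apply mul_le_mul_of_nonneg_left hb1 (by positivity)
        _ = ‖(ξ:ℂ) + I‖^3 := by ring
    rw [norm_div, norm_mul]
    calc ‖(2:ℂ) - 6*(ξ:ℂ)^2‖ / (‖((ξ:ℂ) - I)^4‖ * ‖((ξ:ℂ) + I)^3‖)
        ≤ (6*(1+ξ^2)) / ((1+ξ^2)^2 * (1+ξ^2)) := by
          apply div_le_div₀ (by positivity) hnum (by positivity)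
          rw [norm_pow, norm_pow, ha]
          exact mul_le_mul_of_nonneg_left hb (by positivity)
      _ ≤ 6 * (1+ξ^2)⁻¹ := by
          rw [div_le_iff₀ (by positivity)]
          have h6 : 6*(1+ξ^2)⁻¹*((1+ξ^2)^2*(1+ξ^2)) = 6*((1+ξ^2)⁻¹*(1+ξ^2))*(1+ξ^2)^2 := by ring
          rw [h6, inv_mul_cancel₀ (ne_of_gt hpos)]
          nlinarith [sq_nonneg ξ, sq_nonneg (ξ^2)]

lemma normPhi_le14 (ξ : ℝ) (h : 1 ≤ |ξ|) : ‖Phi14 (ξ:ℂ)‖ ≤ |ξ|⁻¹ := by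
  have hr : (0:ℝ) < |ξ| := lt_of_lt_of_le one_pos h
  have ha : |ξ| ≤ ‖(ξ:ℂ) - I‖ := by
    simpa using Complex.abs_re_le_norm ((ξ:ℂ) - I)
  have hb : |ξ| ≤ ‖(ξ:ℂ) + I‖ := by
    simpa using Complex.abs_re_le_norm ((ξ:ℂ) + I)
  have ha1 : 1 ≤ ‖(ξ:ℂ) - I‖ := le_trans h ha
  have hb1 : 1 ≤ ‖(ξ:ℂ) + I‖ := le_trans h hb
  have ha3 : |ξ| ≤ ‖(ξ:ℂ) - I‖^3 := by
    calc |ξ| ≤ ‖(ξ:ℂ) - I‖ := ha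
      _ ≤ ‖(ξ:ℂ) - I‖^3 := le_self_pow₀ ha1 (by norm_num)
  have hb2 : |ξ| ≤ ‖(ξ:ℂ) + I‖^2 := by
    calc |ξ| ≤ ‖(ξ:ℂ) + I‖ := hb
      _ ≤ ‖(ξ:ℂ) + I‖^2 := le_self_pow₀ hb1 (by norm_num)
  have step : ‖Phi14 (ξ:ℂ)‖ ≤ ‖-(I/3) / ((ξ:ℂ) - I)^3‖ + ‖(I/4) / ((ξ:ℂ) + I)‖
      + ‖(1/4 : ℂ) / ((ξ:ℂ) + I)^2‖ := by
    unfold Phi14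
    exact le_trans (norm_sub_le _ _) (by gcongr; exact norm_add_le _ _)
  have v1 : ‖-(I/3) / ((ξ:ℂ) - I)^3‖ = (1/3) / ‖(ξ:ℂ) - I‖^3 := by
    rw [norm_div, norm_pow]
    norm_num
  have v2 : ‖(I/4) / ((ξ:ℂ) + I)‖ = (1/4) / ‖(ξ:ℂ) + I‖ := by
    rw [norm_div]
    norm_num
  have v3 : ‖(1/4 : ℂ) / ((ξ:ℂ) + I)^2‖ = (1/4) / ‖(ξ:ℂ) + I‖^2 := by
    rw [norm_div, norm_pow]
    norm_num
  rw [v1, v2, v3] at step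
  have b1 : (1/3 : ℝ) / ‖(ξ:ℂ) - I‖^3 ≤ (1/3) / |ξ| := by gcongr
  have b2 : (1/4 : ℝ) / ‖(ξ:ℂ) + I‖ ≤ (1/4) / |ξ| := by gcongr
  have b3 : (1/4 : ℝ) / ‖(ξ:ℂ) + I‖^2 ≤ (1/4) / |ξ| := by gcongr
  have : ‖Phi14 (ξ:ℂ)‖ ≤ (1/3)/|ξ| + (1/4)/|ξ| + (1/4)/|ξ| := by linarith
  calc ‖Phi14 (ξ:ℂ)‖ ≤ (1/3)/|ξ| + (1/4)/|ξ| + (1/4)/|ξ| := this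
    _ = (5/6) * |ξ|⁻¹ := by field_simp; ring
    _ ≤ 1 * |ξ|⁻¹ := by gcongr <;> norm_num
    _ = |ξ|⁻¹ := one_mul _

lemma tendsTop14 : Tendsto (fun ξ : ℝ => Phi14 ξ + (I/4) * (Real.arctan ξ : ℂ)) atTop
    (nhds ((I/4) * ((Real.pi/2 : ℝ) : ℂ))) := by
  have h1 : Tendsto (fun ξ : ℝ => Phi14 ξ) atTop (nhds 0) := by
    apply squeeze_zero_norm' ((eventually_ge_atTop (1:ℝ)).mono fun ξ hξ =>
      normPhi_le14 ξ (le_trans hξ (le_abs_self ξ)))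
    exact tendsto_inv_atTop_zero.comp tendsto_abs_atTop_atTop
  have h2 : Tendsto (fun ξ : ℝ => (I/4) * (Real.arctan ξ : ℂ)) atTop
      (nhds ((I/4) * ((Real.pi/2 : ℝ) : ℂ))) := by
    apply Tendsto.const_mul
    exact (Complex.continuous_ofReal.tendsto _).comp
      (tendsto_nhds_of_tendsto_nhdsWithin Real.tendsto_arctan_atTop)
  simpa using h1.add h2

lemma tendsBot14 : Tendsto (fun ξ : ℝ => Phi14 ξ + (I/4) * (Real.arctan ξ : ℂ)) atBot
    (nhds ((I/4) * ((-(Real.pi/2) : ℝ) : ℂ))) := by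
  have h1 : Tendsto (fun ξ : ℝ => Phi14 ξ) atBot (nhds 0) := by
    apply squeeze_zero_norm' ((eventually_le_atBot (-1:ℝ)).mono fun ξ hξ =>
      normPhi_le14 ξ (by rw [le_abs]; right; linarith))
    exact tendsto_inv_atTop_zero.comp tendsto_abs_atBot_atTop
  have h2 : Tendsto (fun ξ : ℝ => (I/4) * (Real.arctan ξ : ℂ)) atBot
      (nhds ((I/4) * ((-(Real.pi/2) : ℝ) : ℂ))) := by
    apply Tendsto.const_mul
    exact (Complex.continuous_ofReal.tendsto _).comp
      (tendsto_nhds_of_tendsto_nhdsWithin Real.tendsto_arctan_atBot)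
  simpa using h1.add h2

/-- `∫_{-∞}^{∞} (2 - 6 * (ξ : ℂ)^2) / (((ξ : ℂ) - I)^4 * ((ξ : ℂ) + I)^3) dξ = I * (Real.pi : ℂ) / 4`. -/
theorem real_integral_stmt_14 :
    ∫ ξ : ℝ, (2 - 6 * (ξ : ℂ)^2) / (((ξ : ℂ) - I)^4 * ((ξ : ℂ) + I)^3) = I * (Real.pi : ℂ) / 4 := by
  have := MeasureTheory.integral_of_hasDerivAt_of_tendsto hasDeriv14 integrable14
    tendsBot14 tendsTop14
  rw [this]
  push_cast
  ring
end
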